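/- In M_no-cf, an SCM satisfies path-dependent counterfactual fairness (for all s, d with P(S=s,D=d) > 0 and s' ≠ s: P(A^{do(S=s',D=d)}=1 | D=d, S=s) = P(A^{do(S=s,D=d)}=1 | D=d, S=s)) if and only if the conditional probability P(f_A(s,d,U_A)=1) does not depend on s for every d in the support; consequently the set of observational distributions of path-dependent counterfactually fair models equals the set of distributions with A ⟂ S | D. -/

import Mathlib

open MeasureTheory ProbabilityTheory
open scoped ENNReal

/-- Conditional independence `A ⟂ S | D` for a joint distribution on
`(S, D, A)`, expressed in product form. -/
def ObsCI {𝓓 : Type} [MeasurableSpace 𝓓]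
    (P : Measure (Bool × 𝓓 × Bool)) : Prop :=
  ∀ (s : Bool) (d : 𝓓) (a : Bool),
    P {v | v.1 = s ∧ v.2.1 = d ∧ v.2.2 = a} * P {v | v.2.1 = d}
      = P {v | v.2.1 = d ∧ v.2.2 = a} * P {v | v.1 = s ∧ v.2.1 = d}

/-- `P` is the observational distribution of an SCM in the no-confounding
model class that satisfies path-dependent counterfactual fairness:
for all `s, d` with `P(S=s, D=d) > 0` and all `s'`,
`P(A^{do(S=s',D=d)}=1 | D=d, S=s) = P(A^{do(S=s,D=d)}=1 | D=d, S=s)`. -/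
def RealizablePDCF {𝓓 : Type} [MeasurableSpace 𝓓]
    (P : Measure (Bool × 𝓓 × Bool)) : Prop :=
  ∃ (Ω 𝓤A : Type) (_ : MeasurableSpace Ω) (_ : MeasurableSpace 𝓤A)
    (μ : Measure Ω) (_ : IsProbabilityMeasure μ)
    (S : Ω → Bool) (D : Ω → 𝓓) (UA : Ω → 𝓤A)
    (fA : Bool → 𝓓 → 𝓤A → Bool),
    Measurable S ∧ Measurable D ∧ Measurable UA ∧
    (∀ s d, Measurable (fA s d)) ∧
    IndepFun (fun ω => (S ω, D ω)) UA μ ∧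
    (∀ (s : Bool) (d : 𝓓), 0 < μ {ω | S ω = s ∧ D ω = d} →
      ∀ s' : Bool,
        μ {ω | fA s' d (UA ω) = true ∧ S ω = s ∧ D ω = d}
            / μ {ω | S ω = s ∧ D ω = d}
          = μ {ω | fA s d (UA ω) = true ∧ S ω = s ∧ D ω = d}
            / μ {ω | S ω = s ∧ D ω = d}) ∧
    Measure.map (fun ω => (S ω, D ω, fA (S ω) (D ω) (UA ω))) μ = P


section Helpers
set_option linter.unusedSectionVars false
variable {𝓓 : Type} [MeasurableSpace 𝓓] [MeasurableSingletonClass 𝓓] [Fintype 𝓓]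

lemma aux_meas {𝓤A : Type} [MeasurableSpace 𝓤A] (fA : Bool → 𝓓 → 𝓤A → Bool)
    (hfA : ∀ s d, Measurable (fA s d)) :
    Measurable (fun p : (Bool × 𝓓) × 𝓤A => fA p.1.1 p.1.2 p.2) := by
  intro t ht
  have hset : (fun p : (Bool × 𝓓) × 𝓤A => fA p.1.1 p.1.2 p.2) ⁻¹' t
      = ⋃ sd : Bool × 𝓓, ({sd} ×ˢ (fA sd.1 sd.2 ⁻¹' t)) := by
    ext p
    constructor
    · intro h
      exact Set.mem_iUnion.2 ⟨p.1, Set.mem_prod.2 ⟨rfl, h⟩⟩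
    · intro h
      obtain ⟨sd, hsd⟩ := Set.mem_iUnion.1 h
      obtain ⟨h1, h2⟩ := Set.mem_prod.1 hsd
      have : p.1 = sd := h1
      rw [Set.mem_preimage] at h2 ⊢
      rw [this]; exact h2
  rw [hset]
  exact MeasurableSet.iUnion fun sd =>
    (measurableSet_singleton sd).prod (hfA sd.1 sd.2 ht)

lemma aux_prod {Ω 𝓤A : Type} [MeasurableSpace Ω] [MeasurableSpace 𝓤A]
    {μ : Measure Ω} {S : Ω → Bool} {D : Ω → 𝓓} {UA : Ω → 𝓤A}
    {fA : Bool → 𝓓 → 𝓤A → Bool}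
    (hfA : ∀ s d, Measurable (fA s d))
    (hind : IndepFun (fun ω => (S ω, D ω)) UA μ)
    (s s' : Bool) (d : 𝓓) (a : Bool) :
    μ {ω | fA s' d (UA ω) = a ∧ S ω = s ∧ D ω = d}
      = μ {ω | fA s' d (UA ω) = a} * μ {ω | S ω = s ∧ D ω = d} := by
  have h := hind.measure_inter_preimage_eq_mul {(s,d)} (fA s' d ⁻¹' {a})
    (measurableSet_singleton _) (hfA s' d (measurableSet_singleton a))
  have e1 : (fun ω => (S ω, D ω)) ⁻¹' {(s,d)} ∩ UA ⁻¹' (fA s' d ⁻¹' {a})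
      = {ω | fA s' d (UA ω) = a ∧ S ω = s ∧ D ω = d} := by
    ext ω
    simp only [Set.mem_inter_iff, Set.mem_preimage, Set.mem_singleton_iff,
      Prod.mk.injEq, Set.mem_setOf_eq]
    tauto
  have e2 : (fun ω => (S ω, D ω)) ⁻¹' {(s,d)} = {ω | S ω = s ∧ D ω = d} := by
    ext ω
    simp [Prod.ext_iff]
  have e3 : UA ⁻¹' (fA s' d ⁻¹' {a}) = {ω | fA s' d (UA ω) = a} := rfl
  rw [e1, e2, e3] at h
  rw [h, mul_comm]

lemma aux_div (m q : ℝ≥0∞) (hm0 : m ≠ 0) (hmtop : m ≠ ⊤) : q * m / m = q := by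
  rw [mul_div_assoc, ENNReal.div_self hm0 hmtop, mul_one]

lemma fair_iff {Ω 𝓤A : Type} [MeasurableSpace Ω] [MeasurableSpace 𝓤A]
    (μ : Measure Ω) [IsProbabilityMeasure μ]
    (S : Ω → Bool) (D : Ω → 𝓓) (UA : Ω → 𝓤A) (fA : Bool → 𝓓 → 𝓤A → Bool)
    (hfA : ∀ s d, Measurable (fA s d))
    (hind : IndepFun (fun ω => (S ω, D ω)) UA μ) :
    ((∀ (s : Bool) (d : 𝓓), 0 < μ {ω | S ω = s ∧ D ω = d} →
       ∀ s' : Bool,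
         μ {ω | fA s' d (UA ω) = true ∧ S ω = s ∧ D ω = d}
             / μ {ω | S ω = s ∧ D ω = d}
           = μ {ω | fA s d (UA ω) = true ∧ S ω = s ∧ D ω = d}
             / μ {ω | S ω = s ∧ D ω = d}) ↔
     (∀ (d : 𝓓) (s : Bool), 0 < μ {ω | S ω = s ∧ D ω = d} →
       ∀ s' : Bool,
         μ {ω | fA s' d (UA ω) = true} = μ {ω | fA s d (UA ω) = true})) := by
  have key : ∀ (s s' : Bool) (d : 𝓓), 0 < μ {ω | S ω = s ∧ D ω = d} →
      μ {ω | fA s' d (UA ω) = true ∧ S ω = s ∧ D ω = d}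
          / μ {ω | S ω = s ∧ D ω = d} = μ {ω | fA s' d (UA ω) = true} := by
    intro s s' d hpos
    rw [aux_prod hfA hind s s' d true,
      aux_div _ _ hpos.ne' (measure_ne_top μ _)]
  constructor
  · intro h d s hpos s'
    have := h s d hpos s'
    rwa [key s s' d hpos, key s s d hpos] at this
  · intro h s d hpos s'
    rw [key s s' d hpos, key s s d hpos]
    exact h d s hpos s'


lemma forward_obs {Ω 𝓤A : Type} [mΩ : MeasurableSpace Ω] [m𝓤 : MeasurableSpace 𝓤A]
    (μ : Measure Ω) [IsProbabilityMeasure μ]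
    (S : Ω → Bool) (D : Ω → 𝓓) (UA : Ω → 𝓤A) (fA : Bool → 𝓓 → 𝓤A → Bool)
    (hS : Measurable S) (hD : Measurable D) (hUA : Measurable UA)
    (hfA : ∀ s d, Measurable (fA s d))
    (hind : IndepFun (fun ω => (S ω, D ω)) UA μ)
    (hq : ∀ (d : 𝓓) (s : Bool), 0 < μ {ω | S ω = s ∧ D ω = d} →
       ∀ s' : Bool, μ {ω | fA s' d (UA ω) = true} = μ {ω | fA s d (UA ω) = true}) :
    (∀ (s : Bool) (d : 𝓓) (a : Bool),
      μ {ω | S ω = s ∧ D ω = d ∧ fA (S ω) (D ω) (UA ω) = a} * μ {ω | D ω = d}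
        = μ {ω | D ω = d ∧ fA (S ω) (D ω) (UA ω) = a}
            * μ {ω | S ω = s ∧ D ω = d}) := by
  intro s d a
  set m : Bool → ℝ≥0∞ := fun s' => μ {ω | S ω = s' ∧ D ω = d} with hm
  set q : Bool → ℝ≥0∞ := fun s' => μ {ω | fA s' d (UA ω) = a} with hqdef
  -- q is constant across positive-mass s values
  have hq' : ∀ s₁ s₂ : Bool, m s₁ ≠ 0 → q s₂ = q s₁ := by
    intro s₁ s₂ h1
    have htrue := hq d s₁ (pos_iff_ne_zero.mpr h1) s₂
    cases a with
    | true => exact htrue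
    | false =>
      have hc : ∀ s' : Bool, {ω | fA s' d (UA ω) = false}
          = {ω | fA s' d (UA ω) = true}ᶜ := by
        intro s'; ext ω; simp
      have hms : ∀ s' : Bool, MeasurableSet {ω | fA s' d (UA ω) = true} := by
        intro s'
        exact hUA ((hfA s' d) (measurableSet_singleton true))
      show μ _ = μ _
      rw [hc, hc, measure_compl (hms s₂) (measure_ne_top μ _),
        measure_compl (hms s₁) (measure_ne_top μ _), htrue]
  -- decompose sets
  have hsetmain : ∀ s' : Bool,
      {ω | S ω = s' ∧ D ω = d ∧ fA (S ω) (D ω) (UA ω) = a}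
        = {ω | fA s' d (UA ω) = a ∧ S ω = s' ∧ D ω = d} := by
    intro s'; ext ω
    simp only [Set.mem_setOf_eq]
    constructor
    · rintro ⟨h1, h2, h3⟩; rw [h1, h2] at h3; exact ⟨h3, h1, h2⟩
    · rintro ⟨h3, h1, h2⟩; rw [h1, h2]; exact ⟨rfl, rfl, h3⟩
  have hDsplit : {ω | D ω = d} = {ω | S ω = true ∧ D ω = d}
      ∪ {ω | S ω = false ∧ D ω = d} := by
    ext ω; rcases Bool.eq_false_or_eq_true (S ω) with h | h <;> simp [h]
  have hDAsplit : {ω | D ω = d ∧ fA (S ω) (D ω) (UA ω) = a}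
      = {ω | fA true d (UA ω) = a ∧ S ω = true ∧ D ω = d}
        ∪ {ω | fA false d (UA ω) = a ∧ S ω = false ∧ D ω = d} := by
    ext ω
    simp only [Set.mem_setOf_eq, Set.mem_union]
    constructor
    · rintro ⟨h2, h3⟩
      rcases Bool.eq_false_or_eq_true (S ω) with h | h
      · left; rw [h, h2] at h3; exact ⟨h3, h, h2⟩
      · right; rw [h, h2] at h3; exact ⟨h3, h, h2⟩
    · rintro (⟨h3, h1, h2⟩ | ⟨h3, h1, h2⟩) <;>
        (refine ⟨h2, ?_⟩; rw [h1, h2]; exact h3)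
  have hdisj : ∀ (A B : Set Ω), (∀ ω ∈ A, S ω = true) → (∀ ω ∈ B, S ω = false) →
      Disjoint A B := by
    intro A B hA hB
    rw [Set.disjoint_left]
    intro ω h1 h2
    have := hA ω h1; have := hB ω h2; simp_all
  have hmeasSD : ∀ s' : Bool, MeasurableSet {ω | S ω = s' ∧ D ω = d} := by
    intro s'
    have : {ω | S ω = s' ∧ D ω = d}
        = S ⁻¹' {s'} ∩ D ⁻¹' {d} := by ext ω; simp
    rw [this]
    exact (hS (measurableSet_singleton _)).inter (hD (measurableSet_singleton _))
  have hmeasF : ∀ s' : Bool, MeasurableSet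
      {ω | fA s' d (UA ω) = a ∧ S ω = s' ∧ D ω = d} := by
    intro s'
    have : {ω | fA s' d (UA ω) = a ∧ S ω = s' ∧ D ω = d}
        = UA ⁻¹' (fA s' d ⁻¹' {a}) ∩ (S ⁻¹' {s'} ∩ D ⁻¹' {d}) := by
      ext ω; simp [and_assoc]
    rw [this]
    exact (hUA ((hfA s' d) (measurableSet_singleton _))).inter
      ((hS (measurableSet_singleton _)).inter (hD (measurableSet_singleton _)))
  have hmD : μ {ω | D ω = d} = m true + m false := by
    rw [hDsplit, measure_union (hdisj _ _ (fun ω h => h.1) (fun ω h => h.1))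
      (hmeasSD false)]
  have hmDA : μ {ω | D ω = d ∧ fA (S ω) (D ω) (UA ω) = a}
      = m true * q true + m false * q false := by
    rw [hDAsplit, measure_union (hdisj _ _ (fun ω h => h.2.1) (fun ω h => h.2.1))
      (hmeasF false), aux_prod hfA hind true true d a,
      aux_prod hfA hind false false d a]
    simp only [hm, hqdef]
    ring
  have hmain : μ {ω | S ω = s ∧ D ω = d ∧ fA (S ω) (D ω) (UA ω) = a}
      = m s * q s := by
    rw [hsetmain s, aux_prod hfA hind s s d a, mul_comm]
  rw [hmain, hmD, hmDA]
  show m s * q s * (m true + m false)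
    = (m true * q true + m false * q false) * m s
  have term : ∀ s'' : Bool, m s * q s * m s'' = m s'' * q s'' * m s := by
    intro s''
    rcases eq_or_ne (m s) 0 with h | h
    · simp [h]
    rcases eq_or_ne (m s'') 0 with h' | h'
    · simp [h']
    rw [hq' s s'' h]
    ring
  rw [mul_add, add_mul, term true, term false]


lemma backward {P : Measure (Bool × 𝓓 × Bool)} [IsProbabilityMeasure P]
    (hCI : ObsCI P) :
    ∃ (Ω 𝓤A : Type) (_ : MeasurableSpace Ω) (_ : MeasurableSpace 𝓤A)
      (μ : Measure Ω) (_ : IsProbabilityMeasure μ)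
      (S : Ω → Bool) (D : Ω → 𝓓) (UA : Ω → 𝓤A)
      (fA : Bool → 𝓓 → 𝓤A → Bool),
      Measurable S ∧ Measurable D ∧ Measurable UA ∧
      (∀ s d, Measurable (fA s d)) ∧
      IndepFun (fun ω => (S ω, D ω)) UA μ ∧
      (∀ (s : Bool) (d : 𝓓), 0 < μ {ω | S ω = s ∧ D ω = d} →
        ∀ s' : Bool,
          μ {ω | fA s' d (UA ω) = true ∧ S ω = s ∧ D ω = d}
              / μ {ω | S ω = s ∧ D ω = d}
            = μ {ω | fA s d (UA ω) = true ∧ S ω = s ∧ D ω = d}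
              / μ {ω | S ω = s ∧ D ω = d}) ∧
      Measure.map (fun ω => (S ω, D ω, fA (S ω) (D ω) (UA ω))) μ = P := by
  classical
  -- conditional probability of A = true given D = d
  set p : 𝓓 → ℝ≥0∞ := fun d =>
    P {v | v.2.1 = d ∧ v.2.2 = true} / P {v | v.2.1 = d} with hp
  have hp_le : ∀ d, p d ≤ 1 := by
    intro d
    refine ENNReal.div_le_of_le_mul ?_
    rw [one_mul]
    exact measure_mono (fun v hv => hv.1)
  -- Bernoulli measures
  set ν₀ : 𝓓 → Measure Bool := fun d =>
    p d • Measure.dirac true + (1 - p d) • Measure.dirac false with hν₀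
  haveI hprob₀ : ∀ d, IsProbabilityMeasure (ν₀ d) := by
    intro d
    constructor
    simp only [hν₀, Measure.add_apply, Measure.smul_apply, smul_eq_mul,
      measure_univ, mul_one]
    exact add_tsub_cancel_of_le (hp_le d)
  have hν₀true : ∀ d, ν₀ d {true} = p d := by
    intro d
    simp [hν₀, Measure.dirac_apply]
  have hν₀false : ∀ d, ν₀ d {false} = 1 - p d := by
    intro d
    simp [hν₀, Measure.dirac_apply]
  set ν : Measure (𝓓 → Bool) := Measure.pi ν₀ with hνdef
  haveI : IsProbabilityMeasure ν := by
    rw [hνdef]; infer_instance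
  -- cylinder measure
  have hcyl : ∀ (d : 𝓓) (a : Bool),
      ν ((fun g : 𝓓 → Bool => g d) ⁻¹' {a}) = ν₀ d {a} := by
    intro d a
    have hset : (fun g : 𝓓 → Bool => g d) ⁻¹' {a}
        = Set.pi Set.univ (fun d' => if d' = d then {a} else Set.univ) := by
      ext g
      simp only [Set.mem_preimage, Set.mem_singleton_iff, Set.mem_pi,
        Set.mem_univ, forall_true_left]
      constructor
      · intro h d'
        by_cases hd : d' = d
        · subst hd; simp [h]
        · simp [hd]
      · intro h
        have := h d
        simpa using this
    rw [hset, hνdef, Measure.pi_pi]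
    have hterm : ∀ d', ν₀ d' (if d' = d then ({a} : Set Bool) else Set.univ)
        = if d' = d then ν₀ d {a} else 1 := by
      intro d'; split_ifs with h
      · subst h; rfl
      · exact measure_univ
    simp only [hterm]
    simp
  -- marginal on (S, D)
  have hSDmeas : Measurable (fun v : Bool × 𝓓 × Bool => (v.1, v.2.1)) :=
    measurable_fst.prodMk (measurable_fst.comp measurable_snd)
  set Q : Measure (Bool × 𝓓) := P.map (fun v => (v.1, v.2.1)) with hQdef
  haveI : IsProbabilityMeasure Q := Measure.isProbabilityMeasure_map hSDmeas.aemeasurable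
  have hQsing : ∀ (s : Bool) (d : 𝓓),
      Q {(s, d)} = P {v | v.1 = s ∧ v.2.1 = d} := by
    intro s d
    rw [hQdef, Measure.map_apply hSDmeas (measurableSet_singleton _)]
    congr 1
    ext v
    simp [Prod.ext_iff]
  set μ : Measure ((Bool × 𝓓) × (𝓓 → Bool)) := Q.prod ν with hμdef
  haveI : IsProbabilityMeasure μ := by rw [hμdef]; infer_instance
  refine ⟨(Bool × 𝓓) × (𝓓 → Bool), 𝓓 → Bool, inferInstance, inferInstance,
    μ, inferInstance,
    fun ω => ω.1.1, fun ω => ω.1.2, fun ω => ω.2, fun _ d g => g d,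
    (measurable_fst.comp measurable_fst),
    (measurable_snd.comp measurable_fst),
    measurable_snd,
    fun s d => measurable_pi_apply d,
    ?_, fun s d _ s' => rfl, ?_⟩
  · -- independence
    have : (fun ω : (Bool × 𝓓) × (𝓓 → Bool) => (ω.1.1, ω.1.2)) = Prod.fst :=
      rfl
    rw [this]
    rw [indepFun_iff_measure_inter_preimage_eq_mul]
    intro A B hA hB
    have h1 : (Prod.fst ⁻¹' A ∩ Prod.snd ⁻¹' B : Set ((Bool × 𝓓) × (𝓓 → Bool)))
        = A ×ˢ B := (Set.prod_eq A B).symm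
    have h2 : (Prod.fst ⁻¹' A : Set ((Bool × 𝓓) × (𝓓 → Bool))) = A ×ˢ Set.univ := by
      ext ω; simp
    have h3 : (Prod.snd ⁻¹' B : Set ((Bool × 𝓓) × (𝓓 → Bool))) = Set.univ ×ˢ B := by
      ext ω; simp
    rw [h1, h2, h3, hμdef, Measure.prod_prod, Measure.prod_prod,
      Measure.prod_prod]
    simp [measure_univ]
  · -- map equals P
    have hF : Measurable (fun ω : (Bool × 𝓓) × (𝓓 → Bool) =>
        (ω.1.1, ω.1.2, ω.2 ω.1.2)) := by
      refine (measurable_fst.comp measurable_fst).prodMk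
        ((measurable_snd.comp measurable_fst).prodMk ?_)
      exact aux_meas (𝓤A := 𝓓 → Bool) (fun _ d g => g d) (fun s d => measurable_pi_apply d)
    refine Measure.ext_of_singleton fun v => ?_
    obtain ⟨s, d, a⟩ := v
    rw [Measure.map_apply hF (measurableSet_singleton _)]
    have hpre : (fun ω : (Bool × 𝓓) × (𝓓 → Bool) => (ω.1.1, ω.1.2, ω.2 ω.1.2))
        ⁻¹' {(s, d, a)} = {(s, d)} ×ˢ ((fun g : 𝓓 → Bool => g d) ⁻¹' {a}) := by
      ext ω
      simp only [Set.mem_preimage, Set.mem_singleton_iff, Prod.ext_iff,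
        Set.mem_prod]
      constructor
      · rintro ⟨h1, h2, h3⟩
        rw [h2] at h3
        exact ⟨⟨h1, h2⟩, h3⟩
      · rintro ⟨⟨h1, h2⟩, h3⟩
        rw [h2]
        exact ⟨h1, rfl, h3⟩
    rw [hpre, hμdef, Measure.prod_prod, hQsing, hcyl]
    -- now pure ObsCI computation
    have hsingle : ({(s, d, a)} : Set (Bool × 𝓓 × Bool))
        = {v | v.1 = s ∧ v.2.1 = d ∧ v.2.2 = a} := by
      ext v; simp [Prod.ext_iff]
    rw [hsingle]
    have htrue : P {v | v.1 = s ∧ v.2.1 = d} * p d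
        = P {v : Bool × 𝓓 × Bool | v.1 = s ∧ v.2.1 = d ∧ v.2.2 = true} := by
      have h := hCI s d true
      rcases eq_or_ne (P {v : Bool × 𝓓 × Bool | v.2.1 = d}) 0 with h0 | h0
      · have h1 : P {v : Bool × 𝓓 × Bool | v.1 = s ∧ v.2.1 = d} = 0 :=
          le_antisymm (h0 ▸ measure_mono (fun v hv => hv.2)) zero_le
        have h2 : P {v : Bool × 𝓓 × Bool | v.1 = s ∧ v.2.1 = d ∧ v.2.2 = true} = 0 :=
          le_antisymm (h0 ▸ measure_mono (fun v hv => hv.2.1)) zero_le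
        simp [h1, h2]
      · rw [hp]
        rw [← mul_div_assoc, mul_comm, ← h, mul_div_assoc,
          ENNReal.div_self h0 (measure_ne_top P _), mul_one]
    cases a with
    | true => rw [hν₀true]; exact htrue
    | false =>
      rw [hν₀false]
      have hdecomp : P {v : Bool × 𝓓 × Bool | v.1 = s ∧ v.2.1 = d}
          = P {v : Bool × 𝓓 × Bool | v.1 = s ∧ v.2.1 = d ∧ v.2.2 = true}
            + P {v : Bool × 𝓓 × Bool | v.1 = s ∧ v.2.1 = d ∧ v.2.2 = false} := by
        have hsplit : {v : Bool × 𝓓 × Bool | v.1 = s ∧ v.2.1 = d}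
            = {v | v.1 = s ∧ v.2.1 = d ∧ v.2.2 = true}
              ∪ {v | v.1 = s ∧ v.2.1 = d ∧ v.2.2 = false} := by
          ext v
          rcases Bool.eq_false_or_eq_true v.2.2 with h | h <;> simp [h]
        rw [hsplit]
        refine measure_union ?_ ((Set.to_countable _).measurableSet)
        rw [Set.disjoint_left]
        rintro v ⟨_, _, h1⟩ ⟨_, _, h2⟩
        rw [h1] at h2; exact Bool.noConfusion h2
      have key : P {v : Bool × 𝓓 × Bool | v.1 = s ∧ v.2.1 = d} * (1 - p d)
            + P {v : Bool × 𝓓 × Bool | v.1 = s ∧ v.2.1 = d} * p d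
          = P {v : Bool × 𝓓 × Bool | v.1 = s ∧ v.2.1 = d ∧ v.2.2 = false}
            + P {v : Bool × 𝓓 × Bool | v.1 = s ∧ v.2.1 = d ∧ v.2.2 = true} := by
        rw [← mul_add, tsub_add_cancel_of_le (hp_le d), mul_one, hdecomp]
        ring
      rw [htrue] at key
      -- key : X + T = F + T with T = true-measure; cancel
      exact ENNReal.add_left_inj (measure_ne_top P _) |>.mp key

end Helpers

/-- In the no-confounding model class, path-dependent counterfactual fairness
holds iff `P(f_A(s,d,U_A)=1)` does not depend on `s` for every `d` in the
support; consequently, the set of observational distributions of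
path-dependent counterfactually fair models equals the set of distributions
with `A ⟂ S | D`. -/
theorem stmt19 {𝓓 : Type} [MeasurableSpace 𝓓] [MeasurableSingletonClass 𝓓]
    [Fintype 𝓓] :
    (∀ (Ω 𝓤A : Type) (_ : MeasurableSpace Ω) (_ : MeasurableSpace 𝓤A)
       (μ : Measure Ω) (_ : IsProbabilityMeasure μ)
       (S : Ω → Bool) (D : Ω → 𝓓) (UA : Ω → 𝓤A)
       (fA : Bool → 𝓓 → 𝓤A → Bool),
       Measurable S → Measurable D → Measurable UA →
       (∀ s d, Measurable (fA s d)) →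
       IndepFun (fun ω => (S ω, D ω)) UA μ →
       ((∀ (s : Bool) (d : 𝓓), 0 < μ {ω | S ω = s ∧ D ω = d} →
          ∀ s' : Bool,
            μ {ω | fA s' d (UA ω) = true ∧ S ω = s ∧ D ω = d}
                / μ {ω | S ω = s ∧ D ω = d}
              = μ {ω | fA s d (UA ω) = true ∧ S ω = s ∧ D ω = d}
                / μ {ω | S ω = s ∧ D ω = d}) ↔
        (∀ (d : 𝓓) (s : Bool), 0 < μ {ω | S ω = s ∧ D ω = d} →
          ∀ s' : Bool,
            μ {ω | fA s' d (UA ω) = true} = μ {ω | fA s d (UA ω) = true})))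
    ∧ (∀ P : Measure (Bool × 𝓓 × Bool),
        RealizablePDCF P ↔ (IsProbabilityMeasure P ∧ ObsCI P)) := by
  constructor
  · intro Ω 𝓤A mΩ m𝓤 μ hμ S D UA fA hS hD hUA hfA hind
    exact fair_iff μ S D UA fA hfA hind
  · intro P
    constructor
    · rintro ⟨Ω, 𝓤A, mΩ, m𝓤, μ, hμprob, S, D, UA, fA, hS, hD, hUA, hfA, hind,
        hfair, hmap⟩
      have hF : Measurable (fun ω => (S ω, D ω, fA (S ω) (D ω) (UA ω))) := by
        refine hS.prodMk (hD.prodMk ?_)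
        exact (aux_meas fA hfA).comp ((hS.prodMk hD).prodMk hUA)
      constructor
      · rw [← hmap]
        exact Measure.isProbabilityMeasure_map hF.aemeasurable
      · intro s d a
        have h := forward_obs μ S D UA fA hS hD hUA hfA hind
          ((fair_iff μ S D UA fA hfA hind).mp hfair) s d a
        rw [← hmap,
          Measure.map_apply hF ((Set.to_countable _).measurableSet),
          Measure.map_apply hF ((Set.to_countable _).measurableSet),
          Measure.map_apply hF ((Set.to_countable _).measurableSet),
          Measure.map_apply hF ((Set.to_countable _).measurableSet)]
        exact h
    · rintro ⟨hP, hCI⟩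
      exact backward hCI
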